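/- arXiv:2205.05366 — 2 statements merged into one kernel-verified Lean document; each statement's English description precedes it below -/
import Mathlib

section
/- Let v ∈ ℂ and P₀ a real symmetric 2ν×2ν matrix such that [I_ν; vI_ν]* P₀ [I_ν; vI_ν] is positive semidefinite. Let M be a positive semidefinite Hermitian (νk)×(νk) matrix. Define P(P₀, M) := (I₂ ⊗ vec(I_ν) ⊗ I_k)ᵀ (P₀ ⊗ M) (I₂ ⊗ vec(I_ν) ⊗ I_k). Then [I_k; vI_k]* P(P₀, M) [I_k; vI_k] is positive semidefinite. -/
open Matrix Kronecker Complex ComplexOrder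

/-- The vectorization of the `ν×ν` identity matrix, as a `ν²×1` complex matrix. -/
def vecIdent (ν : ℕ) : Matrix (Fin ν × Fin ν) (Fin 1) ℂ :=
  fun p _ => if p.1 = p.2 then 1 else 0

lemma kron_conjTranspose {l m n p : Type*} (A : Matrix l m ℂ) (B : Matrix n p ℂ) :
    (A ⊗ₖ B)ᴴ = Aᴴ ⊗ₖ Bᴴ := by
  ext ⟨i, j⟩ ⟨i', j'⟩
  simp [kroneckerMap_apply, conjTranspose_apply, mul_comm]

lemma kron_psd {m n : Type*} [Fintype m] [Fintype n] [DecidableEq m] [DecidableEq n]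
    {Q : Matrix m m ℂ} {M : Matrix n n ℂ} (hQ : Q.PosSemidef) (hM : M.PosSemidef) :
    (Q ⊗ₖ M).PosSemidef := by
  exact hQ.kronecker hM

lemma contract_psd {ν k : ℕ} {Q : Matrix (Fin ν) (Fin ν) ℂ}
    {M : Matrix (Fin ν × Fin k) (Fin ν × Fin k) ℂ}
    (hQ : Q.PosSemidef) (hM : M.PosSemidef) :
    (Matrix.of fun (f f' : Fin k) =>
      ∑ i, ∑ i', Q i i' * M (i, f) (i', f')).PosSemidef := by
  set F : Matrix (Fin ν × (Fin ν × Fin k)) (Fin k) ℂ :=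
    Matrix.of fun p f => if p.1 = p.2.1 ∧ p.2.2 = f then 1 else 0 with hF
  have key : (Matrix.of fun (f f' : Fin k) =>
      ∑ i, ∑ i', Q i i' * M (i, f) (i', f')) = Fᴴ * ((Q ⊗ₖ M) * F) := by
    ext f f'
    simp only [Matrix.mul_apply, conjTranspose_apply, hF, Matrix.of_apply,
      kroneckerMap_apply, Fintype.sum_prod_type]
    simp [ite_and, apply_ite (starRingEnd ℂ), ite_mul, Finset.sum_ite_eq,
      Finset.sum_ite_eq']
  rw [key, ← Matrix.mul_assoc]
  exact (kron_psd hQ hM).conjTranspose_mul_mul_same F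

lemma stmt7_key (ν k : ℕ) (v : ℂ) (P₀ : Matrix (Fin 2 × Fin ν) (Fin 2 × Fin ν) ℝ)
    (M : Matrix (Fin ν × Fin k) (Fin ν × Fin k) ℂ) :
    ((((!![(1 : ℂ); v]) ⊗ₖ (1 : Matrix (Fin k) (Fin k) ℂ)))ᴴ *
      (((((1 : Matrix (Fin 2) (Fin 2) ℂ) ⊗ₖ vecIdent ν) ⊗ₖ
            (1 : Matrix (Fin k) (Fin k) ℂ)).submatrix
          (fun p : (Fin 2 × Fin ν) × (Fin ν × Fin k) => ((p.1.1, (p.1.2, p.2.1)), p.2.2))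
          (fun q : Fin 2 × Fin k => ((q.1, (0 : Fin 1)), q.2)))ᴴ *
        ((P₀.map Complex.ofReal) ⊗ₖ M) *
        ((((1 : Matrix (Fin 2) (Fin 2) ℂ) ⊗ₖ vecIdent ν) ⊗ₖ
            (1 : Matrix (Fin k) (Fin k) ℂ)).submatrix
          (fun p : (Fin 2 × Fin ν) × (Fin ν × Fin k) => ((p.1.1, (p.1.2, p.2.1)), p.2.2))
          (fun q : Fin 2 × Fin k => ((q.1, (0 : Fin 1)), q.2)))) *
      (((!![(1 : ℂ); v]) ⊗ₖ (1 : Matrix (Fin k) (Fin k) ℂ)))) =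
    (Matrix.of fun f f' : Fin k => ∑ i, ∑ i',
        (((!![(1 : ℂ); v]) ⊗ₖ (1 : Matrix (Fin ν) (Fin ν) ℂ))ᴴ * P₀.map Complex.ofReal *
          ((!![(1 : ℂ); v]) ⊗ₖ (1 : Matrix (Fin ν) (Fin ν) ℂ))) ((0 : Fin 1), i) ((0 : Fin 1), i')
        * M (i, f) (i', f')).submatrix Prod.snd Prod.snd := by
  ext ⟨z, f⟩ ⟨z', f'⟩
  obtain rfl : z = 0 := Subsingleton.elim z 0
  obtain rfl : z' = 0 := Subsingleton.elim z' 0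
  simp only [Matrix.mul_apply, submatrix_apply, conjTranspose_apply, kroneckerMap_apply,
    vecIdent, Matrix.one_apply, Fintype.sum_prod_type, Matrix.of_apply, ite_and,
    apply_ite (starRingEnd ℂ), ite_mul, mul_ite, _root_.map_one, _root_.map_zero, one_mul,
    mul_one, zero_mul, mul_zero, Finset.sum_ite_eq, Finset.sum_ite_eq', Finset.mem_univ,
    if_true]
  simp only [apply_ite (star : ℂ → ℂ), star_zero, ite_mul, mul_ite, zero_mul, mul_zero,
    Finset.sum_ite_eq, Finset.sum_ite_eq', Finset.mem_univ, if_true]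
  simp only [Finset.sum_ite_irrel, Finset.sum_const_zero, Finset.sum_ite_eq,
    Finset.sum_ite_eq', Finset.mem_univ, if_true, star_one, one_mul,
    Matrix.cons_val_fin_one]
  simp only [Finset.sum_mul, Finset.mul_sum]
  conv_lhs => enter [2, a]; rw [Finset.sum_comm]
  rw [Finset.sum_comm]
  conv_lhs => enter [2, c, 2, a]; rw [Finset.sum_comm]
  conv_lhs => enter [2, c]; rw [Finset.sum_comm]
  rw [Finset.sum_comm]
  refine Finset.sum_congr rfl fun c _ => Finset.sum_congr rfl fun d _ =>
    Finset.sum_congr rfl fun a _ => Finset.sum_congr rfl fun b _ => by ring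

/-- Let `v ∈ ℂ`, `P₀` real symmetric `2ν×2ν` with
`[I_ν; vI_ν]* P₀ [I_ν; vI_ν]` positive semidefinite, and `M` a positive semidefinite
`(νk)×(νk)` Hermitian matrix. With
`P(P₀, M) := (I₂ ⊗ vec(I_ν) ⊗ I_k)ᵀ (P₀ ⊗ M) (I₂ ⊗ vec(I_ν) ⊗ I_k)` (after the natural
reindexing of Kronecker index products), `[I_k; vI_k]* P(P₀, M) [I_k; vI_k]` is positive
semidefinite. -/
theorem stmt7 (ν k : ℕ) (v : ℂ) (P₀ : Matrix (Fin 2 × Fin ν) (Fin 2 × Fin ν) ℝ)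
    (hP₀ : P₀.IsSymm)
    (hv : (((!![(1 : ℂ); v]) ⊗ₖ (1 : Matrix (Fin ν) (Fin ν) ℂ))ᴴ * P₀.map Complex.ofReal *
      ((!![(1 : ℂ); v]) ⊗ₖ (1 : Matrix (Fin ν) (Fin ν) ℂ))).PosSemidef)
    (M : Matrix (Fin ν × Fin k) (Fin ν × Fin k) ℂ) (hM : M.PosSemidef) :
    ((((!![(1 : ℂ); v]) ⊗ₖ (1 : Matrix (Fin k) (Fin k) ℂ)))ᴴ *
      (((((1 : Matrix (Fin 2) (Fin 2) ℂ) ⊗ₖ vecIdent ν) ⊗ₖ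
            (1 : Matrix (Fin k) (Fin k) ℂ)).submatrix
          (fun p : (Fin 2 × Fin ν) × (Fin ν × Fin k) => ((p.1.1, (p.1.2, p.2.1)), p.2.2))
          (fun q : Fin 2 × Fin k => ((q.1, (0 : Fin 1)), q.2)))ᴴ *
        ((P₀.map Complex.ofReal) ⊗ₖ M) *
        ((((1 : Matrix (Fin 2) (Fin 2) ℂ) ⊗ₖ vecIdent ν) ⊗ₖ
            (1 : Matrix (Fin k) (Fin k) ℂ)).submatrix
          (fun p : (Fin 2 × Fin ν) × (Fin ν × Fin k) => ((p.1.1, (p.1.2, p.2.1)), p.2.2))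
          (fun q : Fin 2 × Fin k => ((q.1, (0 : Fin 1)), q.2)))) *
      (((!![(1 : ℂ); v]) ⊗ₖ (1 : Matrix (Fin k) (Fin k) ℂ)))).PosSemidef := by
  rw [stmt7_key ν k v P₀ M]
  exact (contract_psd (hv.submatrix fun i : Fin ν => ((0 : Fin 1), i)) hM).submatrix Prod.snd
end

section
/- Let P₀ be a real symmetric 2×2 matrix, M a real symmetric k×k positive semidefinite matrix, and v ∈ ℂ with [1; v]* P₀ [1; v] ≥ 0. Then with V = vI_k and P = P₀ ⊗ M, the matrix [I_k; V]* P [I_k; V] is positive semidefinite, i.e., the multiplier class {P₀ ⊗ M : M ⪰ 0} satisfies the full-block S-procedure value set condition for the repeated-scalar value set. -/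
open Matrix Kronecker Complex ComplexOrder

lemma map_posSemidef {k : ℕ} {M : Matrix (Fin k) (Fin k) ℝ} (hM : M.PosSemidef) :
    (M.map Complex.ofReal).PosSemidef := by
  obtain ⟨B, rfl⟩ : ∃ B : Matrix (Fin k) (Fin k) ℝ, M = Bᴴ * B := by
    open scoped MatrixOrder in (classical exact CStarAlgebra.nonneg_iff_eq_star_mul_self.mp hM.nonneg)
  have : (Bᴴ * B).map Complex.ofReal = (B.map Complex.ofReal)ᴴ * (B.map Complex.ofReal) := by
    ext i j
    simp [Matrix.mul_apply, Matrix.conjTranspose_apply, ← Complex.ofReal_mul]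
  rw [this]
  exact Matrix.posSemidef_conjTranspose_mul_self _

lemma smul_posSemidef {n : Type*} [Fintype n] {A : Matrix n n ℂ} (hA : A.PosSemidef)
    {c : ℂ} (hc : 0 ≤ c) : (c • A).PosSemidef := by
  rw [Matrix.posSemidef_iff_dotProduct_mulVec]
  constructor
  · unfold Matrix.IsHermitian
    have him : starRingEnd ℂ c = c := Complex.conj_eq_iff_im.mpr ((Complex.le_def.mp hc).2.symm)
    rw [Matrix.conjTranspose_smul, hA.1]
    simp [Complex.star_def, him]
  · intro x
    rw [Matrix.smul_mulVec, dotProduct_smul, smul_eq_mul]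
    exact mul_nonneg hc (hA.dotProduct_mulVec_nonneg x)

set_option maxHeartbeats 1000000 in
/-- With `V = vI_k` and `P = P₀ ⊗ M` for `M ⪰ 0` real symmetric and
`[1; v]* P₀ [1; v] ≥ 0`, the matrix `[I_k; V]* P [I_k; V]` is positive semidefinite
(full-block S-procedure value set condition for the repeated-scalar value set). -/
theorem stmt19 (k : ℕ) (P₀ : Matrix (Fin 2) (Fin 2) ℝ) (hP₀ : P₀.IsSymm)
    (M : Matrix (Fin k) (Fin k) ℝ) (hMsymm : M.IsSymm) (hM : M.PosSemidef) (v : ℂ)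
    (hv : 0 ≤ ((!![(1 : ℂ); v])ᴴ * P₀.map Complex.ofReal * !![(1 : ℂ); v]) 0 0) :
    (((!![(1 : ℂ); v]) ⊗ₖ (1 : Matrix (Fin k) (Fin k) ℂ))ᴴ *
      ((P₀.map Complex.ofReal) ⊗ₖ (M.map Complex.ofReal)) *
      ((!![(1 : ℂ); v]) ⊗ₖ (1 : Matrix (Fin k) (Fin k) ℂ))).PosSemidef := by
  set A := !![(1 : ℂ); v]
  set P' := P₀.map Complex.ofReal
  set M' := M.map Complex.ofReal
  have key : ((A ⊗ₖ (1 : Matrix (Fin k) (Fin k) ℂ))ᴴ * (P' ⊗ₖ M') *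
      (A ⊗ₖ (1 : Matrix (Fin k) (Fin k) ℂ))) = (Aᴴ * P' * A) ⊗ₖ M' := by
    rw [kron_conjTranspose, Matrix.conjTranspose_one, ← Matrix.mul_kronecker_mul,
      ← Matrix.mul_kronecker_mul, Matrix.one_mul, Matrix.mul_one]
  rw [key]
  have hS : Aᴴ * P' * A = ((Aᴴ * P' * A) 0 0) • (1 : Matrix (Fin 1) (Fin 1) ℂ) := by
    ext i j
    fin_cases i <;> fin_cases j <;> simp
  have hone : (1 : Matrix (Fin 1) (Fin 1) ℂ) ⊗ₖ M' = M'.submatrix Prod.snd Prod.snd := by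
    ext ⟨i, a⟩ ⟨j, b⟩
    simp [Matrix.kroneckerMap_apply, Subsingleton.elim i j, Matrix.one_apply]
  rw [hS, Matrix.smul_kronecker, hone]
  exact smul_posSemidef ((map_posSemidef hM).submatrix Prod.snd) hv
end
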